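/- Let Λ be a ring with a direct sum decomposition Λ = P ⊕ Q as right Λ-modules, and let f : B → P be a right (add Q)-approximation of P. If there exists a nonzero Λ-linear map u : P → Λ with u ∘ f = 0, then Hom_{K(Mod Λ)}(P*[1], Λ[0]) ≠ 0. (Hence the sufficient condition guaranteeing that the right tilting mutation Λ/P ⊕ P* is a tilting complex fails; this is the paper's criterion that tilting mutation at a vertex i is not possible when there is a nonzero path ending in i whose composition with every arrow out of i is zero.) -/

import Mathlib

open CategoryTheory CategoryTheory.Limits

variable {Λ : Type} [Ring Λ]

/-- The category of right `Λ`-modules, as left modules over `Λᵐᵒᵖ`. -/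
abbrev RMod (Λ : Type) [Ring Λ] := ModuleCat Λᵐᵒᵖ

/-- `Λ` as a right module over itself. -/
abbrev regR (Λ : Type) [Ring Λ] : RMod Λ := ModuleCat.of Λᵐᵒᵖ Λ

/-- The graded pieces of a two-term complex concentrated in degrees 0 and 1. -/
def tX (B P : RMod Λ) : ℤ → RMod Λ
  | 0 => B
  | 1 => P
  | _ => ModuleCat.of Λᵐᵒᵖ PUnit

lemma tX0 (B P : RMod Λ) : tX B P 0 = B := rfl
lemma tX1 (B P : RMod Λ) : tX B P 1 = P := rfl

/-- The two-term cochain complex `P*` with `B` in degree 0, `P` in degree 1,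
differential `f`, and zeros elsewhere. -/
def twoTerm {B P : RMod Λ} (f : B ⟶ P) : CochainComplex (RMod Λ) ℤ where
  X := tX B P
  d i j := if h : i = 0 ∧ j = 1 then
      (eqToHom (by rw [h.1, tX0]) : tX B P i ⟶ B) ≫ f ≫
        (eqToHom (by rw [h.2, tX1]) : P ⟶ tX B P j)
    else 0
  shape i j hij := by
    try dsimp only
    rw [dif_neg]
    rintro ⟨rfl, rfl⟩
    exact hij rfl
  d_comp_d' i j k _ _ := by
    try dsimp only
    by_cases h : i = 0 ∧ j = 1
    · obtain ⟨rfl, rfl⟩ := h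
      rw [dif_neg (by rintro ⟨h1, -⟩; exact one_ne_zero h1 : ¬((1:ℤ) = 0 ∧ k = 1)), comp_zero]
    · rw [dif_neg h, zero_comp]

/-- The complex `M[0]`, with `M` concentrated in degree 0. -/
def sgl (M : RMod Λ) : CochainComplex (RMod Λ) ℤ := twoTerm (0 : M ⟶ ModuleCat.of Λᵐᵒᵖ PUnit)

/-- The homotopy category `K(Mod Λ)` of cochain complexes of right `Λ`-modules. -/
abbrev KMod (Λ : Type) [Ring Λ] := HomotopyCategory (RMod Λ) (ComplexShape.up ℤ)

/-- The quotient functor from complexes to the homotopy category. -/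
abbrev Kq : CochainComplex (RMod Λ) ℤ ⥤ KMod Λ := HomotopyCategory.quotient _ _

/-- The chain map `π : P* ⟶ B[0]` given by the identity of `B` in degree 0. -/
def projB {B P : RMod Λ} (f : B ⟶ P) : twoTerm f ⟶ sgl B where
  f i := if h : i = 0 then eqToHom (by rw [h]; rfl) else 0
  comm' i j hij := by
    try dsimp only
    by_cases h : i = 0
    · subst h
      obtain rfl : j = 1 := by simpa using hij.symm
      simp [twoTerm, sgl]
      all_goals first | rfl | exact comp_zero.symm | exact zero_comp.symm | (ext; rfl) | simp
    · rw [dif_neg h, zero_comp]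
      have hn : ¬(i = 0 ∧ j = 1) := fun hc => h hc.1
      simp [twoTerm, dif_neg hn]
      all_goals first | rfl | exact comp_zero.symm | exact zero_comp.symm | (ext; rfl) | simp

/-- The chain map `B[0] ⟶ P[0]` induced by `f : B ⟶ P`. -/
def sglMap {B P : RMod Λ} (f : B ⟶ P) : sgl B ⟶ sgl P where
  f i := if h : i = 0 then eqToHom (by rw [h]; rfl) ≫ f ≫ eqToHom (by rw [h]; rfl) else 0
  comm' i j hij := by
    try dsimp only
    by_cases h : i = 0
    · subst h
      obtain rfl : j = 1 := by simpa using hij.symm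
      simp [sgl, twoTerm]
      all_goals first | rfl | exact comp_zero.symm | exact zero_comp.symm | (ext; rfl) | simp
    · rw [dif_neg h, zero_comp]
      have hn : ¬(i = 0 ∧ j = 1) := fun hc => h hc.1
      simp [sgl, twoTerm, dif_neg hn]
      all_goals first | rfl | exact comp_zero.symm | exact zero_comp.symm | (ext; rfl) | simp

/-- `M` is in `add X`: it is a direct summand of a finite direct sum of copies of `X`. -/
def memAdd (X M : RMod Λ) : Prop :=
  ∃ (t : ℕ) (s : M ⟶ ⨁ (fun _ : Fin t => X)) (r : (⨁ (fun _ : Fin t => X)) ⟶ M),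
    s ≫ r = 𝟙 M

/-- `f : B ⟶ P` is a right `add X`-approximation of `P`. -/
def IsRightApprox (X : RMod Λ) {B P : RMod Λ} (f : B ⟶ P) : Prop :=
  memAdd X B ∧ ∀ B' : RMod Λ, memAdd X B' → ∀ g : B' ⟶ P, ∃ h : B' ⟶ B, h ≫ f = g

/-- `f : B ⟶ P` is right minimal. -/
def RightMinimal {B P : RMod Λ} (f : B ⟶ P) : Prop :=
  ∀ h : B ⟶ B, h ≫ f = f → IsIso h

/-- The graded pieces of the mapping cone: `B` in degree `-1`, `P` in degree `0`. -/
def cXdeg (B P : RMod Λ) : ℤ → RMod Λ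
  | -1 => B
  | 0 => P
  | _ => ModuleCat.of Λᵐᵒᵖ PUnit

lemma cX0 (B P : RMod Λ) : cXdeg B P 0 = P := rfl
lemma cXm1 (B P : RMod Λ) : cXdeg B P (-1) = B := rfl

/-- The mapping cone `P*[1]` of `f : B ⟶ P`: `B` in degree `-1`, `P` in degree `0`,
with differential `f`. -/
def coneC {B P : RMod Λ} (f : B ⟶ P) : CochainComplex (RMod Λ) ℤ where
  X := cXdeg B P
  d i j := if h : i = -1 ∧ j = 0 then
      (eqToHom (by rw [h.1, cXm1]) : cXdeg B P i ⟶ B) ≫ f ≫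
        (eqToHom (by rw [h.2, cX0]) : P ⟶ cXdeg B P j)
    else 0
  shape i j hij := by
    try dsimp only
    rw [dif_neg]
    rintro ⟨rfl, rfl⟩
    exact hij rfl
  d_comp_d' i j k _ _ := by
    try dsimp only
    by_cases h : i = -1 ∧ j = 0
    · obtain ⟨rfl, rfl⟩ := h
      rw [dif_neg (by rintro ⟨h1, -⟩; exact (by norm_num : (0:ℤ) ≠ -1) h1 :
          ¬((0:ℤ) = -1 ∧ k = 0)), comp_zero]
    · rw [dif_neg h, zero_comp]


/-- The chain map `P*[1] ⟶ M[0]` induced by `u : P ⟶ M` with `f ≫ u = 0`. -/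
def coneToSgl {B P M : RMod Λ} (f : B ⟶ P) (u : P ⟶ M) (huf : f ≫ u = 0) :
    coneC f ⟶ sgl M where
  f i := if h : i = 0 then
      (eqToHom (by rw [h]; rfl) : (coneC f).X i ⟶ P) ≫ u ≫
        (eqToHom (by rw [h]; rfl) : M ⟶ (sgl M).X i)
    else 0
  comm' i j hij := by
    try dsimp only
    by_cases h : j = 0
    · subst h
      obtain rfl : i = -1 := by simp only [ComplexShape.up_Rel] at hij; omega
      rw [dif_neg (by norm_num : ¬(-1 : ℤ) = 0), zero_comp]
      simp [coneC, sgl, twoTerm, huf]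
      all_goals (erw [eqToHom_trans_assoc]; simp [reassoc_of% huf]; rfl)
    · rw [dif_neg h, comp_zero]
      by_cases hi : i = 0
      · subst hi
        obtain rfl : j = 1 := by simpa using hij.symm
        simp [sgl, twoTerm]
        all_goals rfl
      · rw [dif_neg hi, zero_comp]

/-- Let `Λ = P ⊕ Q` as right `Λ`-modules and `f : B ⟶ P` a right
`add Q`-approximation of `P`. If there is a nonzero `u : P ⟶ Λ` with `u ∘ f = 0`, then
`Hom_{K(Mod Λ)}(P*[1], Λ[0]) ≠ 0`, so the sufficient condition guaranteeing that the right
tilting mutation `Λ/P ⊕ P*` is a tilting complex fails. -/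
theorem mutation_obstruction
    (Λ : Type) [Ring Λ] (P Q B : RMod Λ)
    (decomp : regR Λ ≅ P ⊞ Q)
    (f : B ⟶ P) (happrox : IsRightApprox Q f)
    (u : P ⟶ regR Λ) (hu : u ≠ 0) (huf : f ≫ u = 0) :
    ∃ g : (Kq).obj (coneC f) ⟶ (Kq).obj (sgl (regR Λ)), g ≠ 0 := by
  refine ⟨(Kq).map (coneToSgl f u huf), fun hg => hu ?_⟩
  have H : Homotopy (coneToSgl f u huf) 0 :=
    HomotopyCategory.homotopyOfEq _ _ (by simpa using hg)
  have h0 := H.comm 0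
  have hd1 : (coneC f).d 0 1 = 0 := by
    rw [coneC]; dsimp only; rw [dif_neg (by norm_num)]
  have hd2 : (sgl (regR Λ)).d (-1) 0 = 0 := by
    rw [sgl, twoTerm]; dsimp only; rw [dif_neg (by norm_num)]
  rw [dNext_eq H.hom (by simp : (ComplexShape.up ℤ).Rel 0 1),
    prevD_eq H.hom (by simp : (ComplexShape.up ℤ).Rel (-1) 0), hd1, hd2,
    zero_comp, comp_zero] at h0
  have : (coneToSgl f u huf).f 0 = 0 := by simpa using h0
  simpa [coneToSgl] using this
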